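/- Let R be an integral domain and f ∈ R nonzero and non-invertible. Then the unit group of S = R[u,v]/(uv - f) equals the image of the unit group of R; in particular, the images of u and v in S are not invertible. -/

import Mathlib

open MvPolynomial

/-- The suspension ring `S = R[u,v]/(uv - f)`. -/
abbrev Susp (R : Type*) [CommRing R] (f : R) : Type _ :=
  MvPolynomial (Fin 2) R ⧸
    Ideal.span {(X 0 * X 1 - C f : MvPolynomial (Fin 2) R)}

/-- The image of the variable `u` in `S`. -/
noncomputable abbrev suspU (R : Type*) [CommRing R] (f : R) : Susp R f :=
  Ideal.Quotient.mk _ (X 0)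

/-- The image of the variable `v` in `S`. -/
noncomputable abbrev suspV (R : Type*) [CommRing R] (f : R) : Susp R f :=
  Ideal.Quotient.mk _ (X 1)

section Aux

open Polynomial LaurentPolynomial

lemma pol_mul_eq_X_pow {R : Type*} [CommRing R] [IsDomain R] :
    ∀ (k : ℕ) (p q : R[X]), p * q = Polynomial.X ^ k →
      ∃ r : R, IsUnit r ∧ ∃ j : ℕ, p = Polynomial.C r * Polynomial.X ^ j := by
  intro k
  induction k with
  | zero =>
    intro p q h
    simp only [pow_zero] at h
    obtain ⟨r, hr, hrp⟩ := Polynomial.isUnit_iff.mp (IsUnit.of_mul_eq_one _ h)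
    exact ⟨r, hr, 0, by simp [hrp]⟩
  | succ k ih =>
    intro p q h
    have hX : (Polynomial.X : R[X]) ∣ p * q := by
      rw [h]; exact dvd_pow_self _ (Nat.succ_ne_zero k)
    rcases (Polynomial.prime_X).2.2 p q hX with ⟨p', rfl⟩ | ⟨q', rfl⟩
    · have h' : p' * q = Polynomial.X ^ k := by
        apply mul_left_cancel₀ (Polynomial.X_ne_zero (R := R))
        rw [← mul_assoc, h, pow_succ, mul_comm]
      obtain ⟨r, hr, j, hj⟩ := ih p' q h'
      exact ⟨r, hr, j + 1, by rw [hj]; ring⟩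
    · have h' : p * q' = Polynomial.X ^ k := by
        apply mul_left_cancel₀ (Polynomial.X_ne_zero (R := R))
        rw [show Polynomial.X * (p * q') = p * (Polynomial.X * q') by ring, h, pow_succ, mul_comm]
      exact ih p q' h'

lemma laurent_unit {R : Type*} [CommRing R] [IsDomain R] {g h : R[T;T⁻¹]}
    (hgh : g * h = 1) :
    ∃ r : R, IsUnit r ∧ ∃ e : ℤ, g = LaurentPolynomial.C r * T e := by
  obtain ⟨n, p, hp⟩ := exists_T_pow g
  obtain ⟨m, q, hq⟩ := exists_T_pow h
  have hpq : p * q = Polynomial.X ^ (n + m) := by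
    apply Polynomial.toLaurent_injective
    rw [map_mul, hp, hq, Polynomial.toLaurent_X_pow]
    push_cast
    rw [show g * T ↑n * (h * T ↑m) = g * h * (T ↑n * T ↑m) by ring, hgh, one_mul, ← T_add]
  obtain ⟨r, hr, j, hj⟩ := pol_mul_eq_X_pow (n + m) p q hpq
  refine ⟨r, hr, (j : ℤ) - n, ?_⟩
  have : g = toLaurent p * T (-n) := by
    rw [hp, mul_T_assoc]
    simp
  rw [this, hj, map_mul, Polynomial.toLaurent_C, Polynomial.toLaurent_X_pow,
    mul_T_assoc, ← sub_eq_add_neg]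

lemma coeffU {R : Type*} [CommRing R] (p : R[X]) (m : ℤ) :
    (Polynomial.aeval (T 1 : R[T;T⁻¹]) p).coeff m = if 0 ≤ m then p.coeff m.toNat else 0 := by
  induction p using Polynomial.induction_on' with
  | add p q hp hq =>
    rw [map_add, AddMonoidAlgebra.coeff_add, Finsupp.add_apply, hp, hq, Polynomial.coeff_add]
    split_ifs <;> simp
  | monomial n a =>
    rw [Polynomial.aeval_monomial, T_pow, mul_one]
    have : (algebraMap R R[T;T⁻¹]) a * T n = AddMonoidAlgebra.single (n : ℤ) a := by
      rw [← LaurentPolynomial.C_eq_algebraMap, single_eq_C_mul_T]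
    rw [this, AddMonoidAlgebra.coeff_single, Finsupp.single_apply, Polynomial.coeff_monomial]
    split_ifs with h1 h2 h2 <;> first | rfl | omega

lemma coeffV {R : Type*} [CommRing R] (f : R) (q : R[X]) (m : ℤ) :
    (Polynomial.aeval (LaurentPolynomial.C f * T (-1) : R[T;T⁻¹]) q).coeff m =
      if m ≤ 0 then q.coeff (-m).toNat * f ^ (-m).toNat else 0 := by
  induction q using Polynomial.induction_on' with
  | add p q hp hq =>
    rw [map_add, AddMonoidAlgebra.coeff_add, Finsupp.add_apply, hp, hq, Polynomial.coeff_add]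
    split_ifs <;> simp [add_mul]
  | monomial n a =>
    rw [Polynomial.aeval_monomial, mul_pow, ← map_pow, T_pow,
      show ((n : ℤ) * -1) = -(n:ℤ) by ring]
    have : (algebraMap R R[T;T⁻¹]) a * (LaurentPolynomial.C (f ^ n) * T (-n)) =
        AddMonoidAlgebra.single (-(n : ℤ)) (a * f ^ n) := by
      rw [← LaurentPolynomial.C_eq_algebraMap, ← mul_assoc, ← map_mul, single_eq_C_mul_T]
    rw [this]
    simp only [AddMonoidAlgebra.coeff_single, Finsupp.single_apply, Polynomial.coeff_monomial]
    by_cases h1 : -(n : ℤ) = m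
    · have hm : m ≤ 0 := by omega
      have hn : n = (-m).toNat := by omega
      simp [h1, hm, ← hn]
    · by_cases hm : m ≤ 0
      · have hn : ¬ n = (-m).toNat := by omega
        simp [h1, hm, hn]
      · simp [h1, hm]

variable {R : Type*} [CommRing R] (f : R)

lemma susp_UV : suspU R f * suspV R f = algebraMap R (Susp R f) f := by
  have h : Ideal.Quotient.mk
      (Ideal.span {(MvPolynomial.X 0 * MvPolynomial.X 1 - MvPolynomial.C f :
        MvPolynomial (Fin 2) R)})
      (MvPolynomial.X 0 * MvPolynomial.X 1 - MvPolynomial.C f) = 0 := by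
    rw [Ideal.Quotient.eq_zero_iff_mem]
    exact Ideal.subset_span rfl
  rw [RingHom.map_sub, RingHom.map_mul, sub_eq_zero] at h
  rw [show suspU R f * suspV R f = _ from h]
  rfl

lemma susp_nf (s : Susp R f) :
    ∃ p q : Polynomial R, s = Polynomial.aeval (suspU R f) p
      + suspV R f * Polynomial.aeval (suspV R f) q := by
  obtain ⟨P, rfl⟩ := Ideal.Quotient.mk_surjective s
  induction P using MvPolynomial.induction_on with
  | C a =>
    refine ⟨Polynomial.C a, 0, ?_⟩
    simp only [Polynomial.aeval_C, map_zero, mul_zero, add_zero]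
    rfl
  | add P Q hP hQ =>
    obtain ⟨p1, q1, h1⟩ := hP
    obtain ⟨p2, q2, h2⟩ := hQ
    refine ⟨p1 + p2, q1 + q2, ?_⟩
    rw [map_add, h1, h2, map_add, map_add]
    ring
  | mul_X P i hP =>
    obtain ⟨p, q, hp⟩ := hP
    set U := suspU R f
    set V := suspV R f
    have key : ∀ g : Polynomial R, Polynomial.aeval V g
        = V * Polynomial.aeval V g.divX + algebraMap R (Susp R f) (g.coeff 0) := by
      intro g
      conv_lhs => rw [← Polynomial.X_mul_divX_add g]
      rw [map_add, map_mul, Polynomial.aeval_X, Polynomial.aeval_C]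
    have keyU : ∀ g : Polynomial R, Polynomial.aeval U g
        = U * Polynomial.aeval U g.divX + algebraMap R (Susp R f) (g.coeff 0) := by
      intro g
      conv_lhs => rw [← Polynomial.X_mul_divX_add g]
      rw [map_add, map_mul, Polynomial.aeval_X, Polynomial.aeval_C]
    fin_cases i
    · refine ⟨Polynomial.X * p + Polynomial.C ((Polynomial.C f * q).coeff 0),
        (Polynomial.C f * q).divX, ?_⟩
      rw [RingHom.map_mul, hp]
      show (Polynomial.aeval U p + V * Polynomial.aeval V q) * U = _
      have h2 : (V * Polynomial.aeval V q) * U = Polynomial.aeval V (Polynomial.C f * q) := by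
        rw [map_mul, Polynomial.aeval_C]
        rw [show (V * Polynomial.aeval V q) * U = Polynomial.aeval V q * (U * V) by ring,
          susp_UV]
        ring
      rw [add_mul, h2, key (Polynomial.C f * q)]
      simp only [map_add, map_mul, Polynomial.aeval_X, Polynomial.aeval_C]
      ring
    · refine ⟨Polynomial.C f * p.divX, Polynomial.X * q + Polynomial.C (p.coeff 0), ?_⟩
      rw [RingHom.map_mul, hp]
      show (Polynomial.aeval U p + V * Polynomial.aeval V q) * V = _
      have h1 : Polynomial.aeval U p * V
          = Polynomial.aeval U (Polynomial.C f * p.divX)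
            + algebraMap R (Susp R f) (p.coeff 0) * V := by
        rw [keyU p, add_mul, map_mul, Polynomial.aeval_C,
          show U * Polynomial.aeval U p.divX * V = Polynomial.aeval U p.divX * (U * V) by ring,
          susp_UV]
        ring
      have h2 : V * Polynomial.aeval V q * V = V * Polynomial.aeval V (Polynomial.X * q) := by
        rw [map_mul, Polynomial.aeval_X]; ring
      rw [add_mul, h1, h2]
      simp only [map_add, map_mul, Polynomial.aeval_X, Polynomial.aeval_C]
      ring

noncomputable def suspToLaurent : Susp R f →ₐ[R] LaurentPolynomial R :=
  Ideal.Quotient.liftₐ _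
    (MvPolynomial.aeval (fun i : Fin 2 =>
      if i = 0 then (T 1 : R[T;T⁻¹]) else LaurentPolynomial.C f * T (-1)))
    (by
      intro a ha
      rw [Ideal.mem_span_singleton] at ha
      obtain ⟨c, rfl⟩ := ha
      rw [map_mul]
      have h0 : (MvPolynomial.aeval (fun i : Fin 2 =>
          if i = 0 then (T 1 : R[T;T⁻¹]) else LaurentPolynomial.C f * T (-1)))
          (MvPolynomial.X 0 * MvPolynomial.X 1 - MvPolynomial.C f) = 0 := by
        rw [map_sub, map_mul, MvPolynomial.aeval_X, MvPolynomial.aeval_X, MvPolynomial.aeval_C]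
        norm_num
      rw [h0, zero_mul])

lemma suspToLaurent_U : suspToLaurent f (suspU R f) = (T 1 : R[T;T⁻¹]) := by
  rw [suspToLaurent, Ideal.Quotient.liftₐ_apply]
  exact (Ideal.Quotient.lift_mk _ _ _).trans (by simp)

lemma suspToLaurent_V :
    suspToLaurent f (suspV R f) = LaurentPolynomial.C f * T (-1) := by
  rw [suspToLaurent, Ideal.Quotient.liftₐ_apply]
  exact (Ideal.Quotient.lift_mk _ _ _).trans (by simp)

lemma suspToLaurent_coeff (s : Susp R f) (p q : R[X])
    (hnf : s = Polynomial.aeval (suspU R f) p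
      + suspV R f * Polynomial.aeval (suspV R f) q) (m : ℤ) :
    (suspToLaurent f s).coeff m = (if 0 ≤ m then p.coeff m.toNat else 0)
      + (if m ≤ 0 then (Polynomial.X * q : R[X]).coeff (-m).toNat * f ^ (-m).toNat else 0) := by
  rw [hnf, map_add, map_mul, suspToLaurent_V]
  have hU : suspToLaurent f (Polynomial.aeval (suspU R f) p)
      = Polynomial.aeval (T 1 : R[T;T⁻¹]) p := by
    rw [← Polynomial.aeval_algHom_apply, suspToLaurent_U]
  have hV : suspToLaurent f (Polynomial.aeval (suspV R f) q)
      = Polynomial.aeval (LaurentPolynomial.C f * T (-1) : R[T;T⁻¹]) q := by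
    rw [← Polynomial.aeval_algHom_apply, suspToLaurent_V]
  rw [hU, hV]
  have hXq : (LaurentPolynomial.C f * T (-1)) *
      Polynomial.aeval (LaurentPolynomial.C f * T (-1) : R[T;T⁻¹]) q
      = Polynomial.aeval (LaurentPolynomial.C f * T (-1) : R[T;T⁻¹]) (Polynomial.X * q) := by
    rw [map_mul, Polynomial.aeval_X]
  rw [hXq, AddMonoidAlgebra.coeff_add, Finsupp.add_apply, coeffU, coeffV]

lemma susp_eq_zero {R : Type*} [CommRing R] [IsDomain R] {f : R} (hf0 : f ≠ 0) {s : Susp R f}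
    (hs : suspToLaurent f s = 0) : s = 0 := by
  obtain ⟨p, q, hnf⟩ := susp_nf f s
  have hc : ∀ m : ℤ, (0 : R) = (if 0 ≤ m then p.coeff m.toNat else 0)
      + (if m ≤ 0 then (Polynomial.X * q : R[X]).coeff (-m).toNat * f ^ (-m).toNat else 0) := by
    intro m
    rw [← suspToLaurent_coeff f s p q hnf m, hs]
    rfl
  have hp : p = 0 := by
    ext n
    have h := (hc (n : ℤ)).symm
    rw [if_pos (Int.natCast_nonneg n), Int.toNat_natCast] at h
    rcases Nat.eq_zero_or_pos n with rfl | hn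
    · rw [if_pos (show ((0:ℕ):ℤ) ≤ 0 from by omega)] at h
      simpa [Polynomial.mul_coeff_zero] using h
    · rw [if_neg (by omega)] at h
      simpa using h
  have hq : q = 0 := by
    ext j
    have h := (hc (-(j + 1 : ℤ))).symm
    rw [if_neg (by omega), if_pos (by omega), zero_add,
      show (-(-(j + 1 : ℤ))).toNat = j + 1 by omega, Polynomial.coeff_X_mul] at h
    rcases mul_eq_zero.mp h with h' | h'
    · simpa using h'
    · exact absurd h' (pow_ne_zero _ hf0)
  rw [hnf, hp, hq]
  simp

end Aux

/-- For a domain `R` and a nonzero non-invertible `f ∈ R`, the units of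
`S = R[u,v]/(uv - f)` are exactly the images of the units of `R`; in particular
the images of `u` and `v` are not invertible. -/
theorem suspension_units (R : Type*) [CommRing R] [IsDomain R] (f : R)
    (hf0 : f ≠ 0) (hf : ¬ IsUnit f) :
    (∀ s : Susp R f, IsUnit s ↔ ∃ r : R, IsUnit r ∧ algebraMap R (Susp R f) r = s) ∧
    ¬ IsUnit (suspU R f) ∧ ¬ IsUnit (suspV R f) := by
  open Polynomial LaurentPolynomial in
  have huniv : ∀ s : Susp R f, IsUnit s ↔
      ∃ r : R, IsUnit r ∧ algebraMap R (Susp R f) r = s := by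
    intro s
    constructor
    · intro hs
      obtain ⟨un, hun⟩ := hs
      set t : Susp R f := ↑un⁻¹ with ht
      have hst : s * t = 1 := by rw [← hun, ht]; exact un.mul_inv
      have hφ : suspToLaurent f s * suspToLaurent f t = 1 := by
        rw [← map_mul, hst, map_one]
      obtain ⟨r, hr, e, he⟩ := laurent_unit hφ
      rcases lt_trichotomy e 0 with hlt | rfl | hgt
      · exfalso
        obtain ⟨p, q, hnf⟩ := susp_nf f s
        have h1 := suspToLaurent_coeff f s p q hnf e
        have hre : (suspToLaurent f s).coeff e = r := by
          rw [he, ← single_eq_C_mul_T, AddMonoidAlgebra.coeff_single, Finsupp.single_apply, if_pos rfl]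
        rw [hre, if_neg (by omega), if_pos (by omega), zero_add] at h1
        have hdvd : f ∣ r := by
          rw [h1]
          exact Dvd.dvd.mul_left (dvd_pow_self f (by omega)) _
        exact hf (isUnit_of_dvd_unit hdvd hr)
      · rw [T_zero, mul_one] at he
        refine ⟨r, hr, ?_⟩
        have h0 : suspToLaurent f (s - algebraMap R (Susp R f) r) = 0 := by
          rw [map_sub, AlgHom.commutes, he, ← LaurentPolynomial.C_eq_algebraMap, sub_self]
        have := susp_eq_zero hf0 h0
        rw [sub_eq_zero] at this
        exact this.symm
      · exfalso
        obtain ⟨r', hrr'⟩ := hr.exists_right_inv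
        have hsne : suspToLaurent f s ≠ 0 := left_ne_zero_of_mul_eq_one hφ
        have hts : suspToLaurent f t = LaurentPolynomial.C r' * T (-e) := by
          apply mul_left_cancel₀ hsne
          rw [hφ, he, show (LaurentPolynomial.C r * T e) * (LaurentPolynomial.C r' * T (-e))
              = (LaurentPolynomial.C r * LaurentPolynomial.C r') * (T e * T (-e)) by ring,
            ← map_mul, hrr', ← T_add, add_neg_cancel, T_zero, map_one, one_mul]
        obtain ⟨p, q, hnf⟩ := susp_nf f t
        have h1 := suspToLaurent_coeff f t p q hnf (-e)
        have hre : (suspToLaurent f t).coeff (-e) = r' := by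
          rw [hts, ← single_eq_C_mul_T, AddMonoidAlgebra.coeff_single, Finsupp.single_apply, if_pos rfl]
        rw [hre, if_neg (by omega), if_pos (by omega), zero_add] at h1
        have hdvd : f ∣ r' := by
          rw [h1]
          exact Dvd.dvd.mul_left (dvd_pow_self f (by omega)) _
        exact hf (isUnit_of_dvd_unit hdvd
          (IsUnit.of_mul_eq_one (a := r') r (by rw [mul_comm]; exact hrr')))
    · rintro ⟨r, hr, rfl⟩
      exact hr.map (algebraMap R (Susp R f))
  refine ⟨huniv, ?_, ?_⟩
  · intro h
    obtain ⟨r, hr, hrs⟩ := (huniv _).mp h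
    have h1 : (LaurentPolynomial.C r : R[T;T⁻¹]) = T 1 := by
      rw [← suspToLaurent_U (f := f), ← hrs, AlgHom.commutes,
        LaurentPolynomial.C_eq_algebraMap]
    have h2 : (LaurentPolynomial.C r : R[T;T⁻¹]).coeff 1 = (T 1 : R[T;T⁻¹]).coeff 1 := by rw [h1]
    simp at h2
  · intro h
    obtain ⟨r, hr, hrs⟩ := (huniv _).mp h
    have h1 : (LaurentPolynomial.C r : R[T;T⁻¹]) = LaurentPolynomial.C f * T (-1) := by
      rw [← suspToLaurent_V (f := f), ← hrs, AlgHom.commutes,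
        LaurentPolynomial.C_eq_algebraMap]
    have h2 : (LaurentPolynomial.C r : R[T;T⁻¹]).coeff (-1)
        = (LaurentPolynomial.C f * T (-1) : R[T;T⁻¹]).coeff (-1) := by rw [h1]
    rw [← single_eq_C_mul_T, AddMonoidAlgebra.coeff_single, Finsupp.single_apply, if_pos rfl] at h2
    simp at h2
    exact hf0 h2.symm
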